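/- The group G = ⟨a, b | b²a⁻²b² = a⁻¹b³a⁻¹⟩ is not bi-orderable. -/

import Mathlib

/-- The 5₂ knot group ⟨a, b | b²a⁻²b² = a⁻¹b³a⁻¹⟩, with a ↦ true, b ↦ false. -/
def FiveTwoRels : Set (FreeGroup Bool) :=
  {FreeGroup.of false ^ 2 * (FreeGroup.of true)⁻¹ ^ 2 * FreeGroup.of false ^ 2 *
    ((FreeGroup.of true)⁻¹ * FreeGroup.of false ^ 3 * (FreeGroup.of true)⁻¹)⁻¹}

/-- image of `a` in a permutation quotient: the 3-cycle (2 3 4). -/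
def fiveTwoPermA : Equiv.Perm (Fin 5) := ([2, 3, 4] : List (Fin 5)).formPerm

/-- image of `b` in a permutation quotient: the 5-cycle (0 2 4 1 3). -/
def fiveTwoPermB : Equiv.Perm (Fin 5) := ([0, 2, 4, 1, 3] : List (Fin 5)).formPerm

private theorem biorder_contra {H : Type*} [Group H] (r : H → H → Prop)
    (hsto : IsStrictTotalOrder H r)
    (hinv : ∀ x y z : H, r y z → r (x * y) (x * z) ∧ r (y * x) (z * x))
    (x y : H) (hrel : y ^ 2 * x⁻¹ ^ 2 * y ^ 2 = x⁻¹ * y ^ 3 * x⁻¹) (hy : r 1 y) : False := by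
  letI := hsto
  have asymm : ∀ u v : H, r u v → r v u → False := fun u v h1 h2 =>
    irrefl_of r u (trans_of r h1 h2)
  have lmul : ∀ (t : H) {u v : H}, r u v → r (t * u) (t * v) := fun t u v h => (hinv t u v h).1
  have rmul : ∀ (t : H) {u v : H}, r u v → r (u * t) (v * t) := fun t u v h => (hinv t u v h).2
  have lcancel : ∀ (t : H) {u v : H}, r (t * u) (t * v) → r u v := by
    intro t u v h
    have h2 := lmul t⁻¹ h
    rwa [inv_mul_cancel_left, inv_mul_cancel_left] at h2
  have le_mul_le : ∀ {u v w z : H}, ¬ r v u → ¬ r z w → ¬ r (v * z) (u * w) := by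
    intro u v w z h1 h2 hc
    rcases trichotomous_of r u v with h | h | h
    · rcases trichotomous_of r w z with h' | h' | h'
      · exact asymm _ _ hc (trans_of r (rmul w h) (lmul v h'))
      · rw [← h'] at hc; exact asymm _ _ hc (rmul w h)
      · exact h2 h'
    · rw [← h] at hc
      rcases trichotomous_of r w z with h' | h' | h'
      · exact asymm _ _ hc (lmul u h')
      · rw [← h'] at hc; exact irrefl_of r _ hc
      · exact h2 h'
    · exact h1 h
  have lt_of_le_lt : ∀ {u v w : H}, ¬ r v u → r v w → r u w := by
    intro u v w h1 h2
    rcases trichotomous_of r u v with h | h | h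
    · exact trans_of r h h2
    · subst h; exact h2
    · exact absurd h h1
  have posconj : ∀ t : H, r 1 (t * y * t⁻¹) := by
    intro t
    have h1 := lmul t hy
    rw [mul_one] at h1
    have h2 := rmul t⁻¹ h1
    rwa [mul_inv_cancel] at h2
  have conjdown : ∀ {u v : H}, r (x * u * x⁻¹) (x * v * x⁻¹) → r u v := by
    intro u v h
    have h2 := rmul x h
    rw [inv_mul_cancel_right, inv_mul_cancel_right] at h2
    exact lcancel x h2
  have conjup' : ∀ {u v : H}, r u v → r (x⁻¹ * u * x) (x⁻¹ * v * x) :=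
    fun h => rmul x (lmul x⁻¹ h)
  have chainR : ∀ p q z : H, p * p * (z * z) = q * q * q → ¬ r p q → ¬ r q (z * z) := by
    intro p q z hE hle h
    have h1 := lmul (q * q) h
    have h3 := le_mul_le (le_mul_le hle hle) (irrefl_of r (z * z))
    rw [hE] at h3
    exact h3 h1
  have chainL : ∀ p q z : H, (z * z) * (p * p) = q * q * q → ¬ r p q → ¬ r q (z * z) := by
    intro p q z hE hle h
    have h1 := rmul (q * q) h
    have h2 := le_mul_le (irrefl_of r (z * z)) (le_mul_le hle hle)
    rw [hE] at h2
    rw [← mul_assoc] at h1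
    exact h2 h1
  have finalR : ∀ p q z : H, p * p * (z * z) = q * q * q → ¬ r p (q * q) → r 1 z → r 1 q →
      False := by
    intro p q z hE hS hz hq
    have hzz : r 1 (z * z) := by
      have hz2 := lmul z hz
      rw [mul_one] at hz2
      exact trans_of r hz hz2
    have h3 : r (p * p) (p * p * (z * z)) := by
      have := lmul (p * p) hzz
      rwa [mul_one] at this
    rw [hE] at h3
    have h4 := le_mul_le hS hS
    have h5 : r ((q * q) * (q * q)) (q * q * q) := lt_of_le_lt h4 h3
    have h6 : ((q * q) * (q * q) : H) = (q * q * q) * q := by group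
    rw [h6] at h5
    have h7 := lmul (q * q * q)⁻¹ h5
    rw [inv_mul_cancel_left, inv_mul_cancel] at h7
    exact asymm _ _ h7 hq
  have finalL : ∀ p q z : H, (z * z) * (p * p) = q * q * q → ¬ r p (q * q) → r 1 z → r 1 q →
      False := by
    intro p q z hE hS hz hq
    have hzz : r 1 (z * z) := by
      have hz2 := lmul z hz
      rw [mul_one] at hz2
      exact trans_of r hz hz2
    have h3 : r (p * p) ((z * z) * (p * p)) := by
      have := rmul (p * p) hzz
      rwa [one_mul] at this
    rw [hE] at h3
    have h4 := le_mul_le hS hS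
    have h5 : r ((q * q) * (q * q)) (q * q * q) := lt_of_le_lt h4 h3
    have h6 : ((q * q) * (q * q) : H) = q * (q * q * q) := by group
    rw [h6] at h5
    have h7 := rmul (q * q * q)⁻¹ h5
    rw [mul_inv_cancel_right, mul_inv_cancel] at h7
    exact asymm _ _ h7 hq
  have key : x * y ^ 2 * x⁻¹ * (x⁻¹ * y ^ 2 * x) = y ^ 3 := by
    calc x * y ^ 2 * x⁻¹ * (x⁻¹ * y ^ 2 * x)
        = x * (y ^ 2 * x⁻¹ ^ 2 * y ^ 2) * x := by group
      _ = x * (x⁻¹ * y ^ 3 * x⁻¹) * x := by rw [hrel]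
      _ = y ^ 3 := by group
  set b1 : H := x * y * x⁻¹ with hb1
  set b2 : H := x * b1 * x⁻¹ with hb2
  set b3 : H := x * b2 * x⁻¹ with hb3
  set bm1 : H := x⁻¹ * y * x with hbm1
  set bm2 : H := x⁻¹ * bm1 * x with hbm2
  set bm3 : H := x⁻¹ * bm2 * x with hbm3
  have E1 : b2 * b2 * (y * y) = b1 * b1 * b1 := by
    rw [hb2, hb1]
    calc (x * (x * y * x⁻¹) * x⁻¹) * (x * (x * y * x⁻¹) * x⁻¹) * (y * y)
        = x * (x * y ^ 2 * x⁻¹ * (x⁻¹ * y ^ 2 * x)) * x⁻¹ := by simp only [pow_two, pow_succ, pow_zero, one_mul, mul_assoc]; group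
      _ = x * y ^ 3 * x⁻¹ := by rw [key]
      _ = (x * y * x⁻¹) * (x * y * x⁻¹) * (x * y * x⁻¹) := by simp only [pow_two, pow_succ, pow_zero, one_mul, mul_assoc]; group
  have E2 : b3 * b3 * (b1 * b1) = b2 * b2 * b2 := by
    rw [hb3, hb2, hb1]
    calc (x * (x * (x * y * x⁻¹) * x⁻¹) * x⁻¹) * (x * (x * (x * y * x⁻¹) * x⁻¹) * x⁻¹) *
          ((x * y * x⁻¹) * (x * y * x⁻¹))
        = x * (x * (x * y ^ 2 * x⁻¹ * (x⁻¹ * y ^ 2 * x)) * x⁻¹) * x⁻¹ := by simp only [pow_two, pow_succ, pow_zero, one_mul, mul_assoc]; group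
      _ = x * (x * y ^ 3 * x⁻¹) * x⁻¹ := by rw [key]
      _ = (x * (x * y * x⁻¹) * x⁻¹) * (x * (x * y * x⁻¹) * x⁻¹) *
          (x * (x * y * x⁻¹) * x⁻¹) := by simp only [pow_two, pow_succ, pow_zero, one_mul, mul_assoc]; group
  have Em1 : (y * y) * (bm2 * bm2) = bm1 * bm1 * bm1 := by
    rw [hbm2, hbm1]
    calc (y * y) * ((x⁻¹ * (x⁻¹ * y * x) * x) * (x⁻¹ * (x⁻¹ * y * x) * x))
        = x⁻¹ * (x * y ^ 2 * x⁻¹ * (x⁻¹ * y ^ 2 * x)) * x := by simp only [pow_two, pow_succ, pow_zero, one_mul, mul_assoc]; group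
      _ = x⁻¹ * y ^ 3 * x := by rw [key]
      _ = (x⁻¹ * y * x) * (x⁻¹ * y * x) * (x⁻¹ * y * x) := by simp only [pow_two, pow_succ, pow_zero, one_mul, mul_assoc]; group
  have Em2 : (bm1 * bm1) * (bm3 * bm3) = bm2 * bm2 * bm2 := by
    rw [hbm3, hbm2, hbm1]
    calc ((x⁻¹ * y * x) * (x⁻¹ * y * x)) *
          ((x⁻¹ * (x⁻¹ * (x⁻¹ * y * x) * x) * x) * (x⁻¹ * (x⁻¹ * (x⁻¹ * y * x) * x) * x))
        = x⁻¹ * (x⁻¹ * (x * y ^ 2 * x⁻¹ * (x⁻¹ * y ^ 2 * x)) * x) * x := by simp only [pow_two, pow_succ, pow_zero, one_mul, mul_assoc]; group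
      _ = x⁻¹ * (x⁻¹ * y ^ 3 * x) * x := by rw [key]
      _ = (x⁻¹ * (x⁻¹ * y * x) * x) * (x⁻¹ * (x⁻¹ * y * x) * x) *
          (x⁻¹ * (x⁻¹ * y * x) * x) := by simp only [pow_two, pow_succ, pow_zero, one_mul, mul_assoc]; group
  by_cases hA : r b1 y
  · -- decreasing case: y > b1, so y < bm1 < bm2 < bm3
    have hyx : x⁻¹ * (x * y * x⁻¹) * x = y := by group
    have d1 : r y bm1 := by
      have h := conjup' hA
      rw [hb1] at h
      rw [hyx] at h
      rwa [← hbm1] at h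
    have d2 : r bm1 bm2 := by
      have h := conjup' d1
      rwa [← hbm1, ← hbm2] at h
    have d3 : r bm2 bm3 := by
      have h := conjup' d2
      rwa [← hbm2, ← hbm3] at h
    have B3 : ¬ r bm3 bm2 := fun h => asymm _ _ h d3
    have S2 : ¬ r bm2 (bm1 * bm1) := chainL bm3 bm2 bm1 Em2 B3
    have hq : r 1 bm1 := by
      have h := posconj x⁻¹
      rw [inv_inv] at h
      rwa [← hbm1] at h
    exact finalL bm2 bm1 y Em1 S2 hy hq
  · -- increasing case: b1 ≥ y, so b2 ≥ b1, b3 ≥ b2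
    have A1 : ¬ r b2 b1 := by
      intro h
      rw [hb2, hb1] at h
      have h2 := conjdown h
      rw [← hb1] at h2
      exact hA h2
    have A2 : ¬ r b3 b2 := by
      intro h
      rw [hb3, hb2] at h
      have h2 := conjdown h
      rw [← hb2] at h2
      exact A1 h2
    have S2 : ¬ r b2 (b1 * b1) := chainR b3 b2 b1 E2 A2
    have hq : r 1 b1 := by
      have h := posconj x
      rwa [← hb1] at h
    exact finalR b2 b1 y E1 S2 hy hq

set_option maxRecDepth 20000 in
theorem fiveTwo_not_biorderable :
    ¬ ∃ r : PresentedGroup FiveTwoRels → PresentedGroup FiveTwoRels → Prop,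
      IsStrictTotalOrder (PresentedGroup FiveTwoRels) r ∧
      ∀ x y z : PresentedGroup FiveTwoRels,
        r y z → r (x * y) (x * z) ∧ r (y * x) (z * x) := by
  rintro ⟨r, hsto, hinv⟩
  letI := hsto
  -- the relation holds in the presented group
  have hmem : FreeGroup.of false ^ 2 * (FreeGroup.of true)⁻¹ ^ 2 * FreeGroup.of false ^ 2 *
      ((FreeGroup.of true)⁻¹ * FreeGroup.of false ^ 3 * (FreeGroup.of true)⁻¹)⁻¹ ∈
      Subgroup.normalClosure FiveTwoRels :=
    Subgroup.subset_normalClosure rfl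
  have hW : PresentedGroup.mk FiveTwoRels
      (FreeGroup.of false ^ 2 * (FreeGroup.of true)⁻¹ ^ 2 * FreeGroup.of false ^ 2 *
        ((FreeGroup.of true)⁻¹ * FreeGroup.of false ^ 3 * (FreeGroup.of true)⁻¹)⁻¹) = 1 :=
    (QuotientGroup.eq_one_iff _).mpr hmem
  have hrel : (PresentedGroup.of false : PresentedGroup FiveTwoRels) ^ 2 *
      (PresentedGroup.of true)⁻¹ ^ 2 * PresentedGroup.of false ^ 2 *
      ((PresentedGroup.of true)⁻¹ * PresentedGroup.of false ^ 3 *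
        (PresentedGroup.of true)⁻¹)⁻¹ = 1 := by
    simpa only [map_mul, map_pow, map_inv, show ∀ t, PresentedGroup.mk FiveTwoRels (FreeGroup.of t) = PresentedGroup.of t from fun _ => rfl] using hW
  rw [mul_inv_eq_one] at hrel
  -- a finite quotient where b is nontrivial
  have hf : ∀ w ∈ FiveTwoRels,
      FreeGroup.lift (fun t : Bool => if t then fiveTwoPermA else fiveTwoPermB) w = 1 := by
    intro w hw
    have hw' : w = FreeGroup.of false ^ 2 * (FreeGroup.of true)⁻¹ ^ 2 * FreeGroup.of false ^ 2 *
        ((FreeGroup.of true)⁻¹ * FreeGroup.of false ^ 3 * (FreeGroup.of true)⁻¹)⁻¹ := hw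
    subst hw'
    simp only [map_mul, map_pow, map_inv, FreeGroup.lift_apply_of]
    decide
  rcases trichotomous_of r 1 (PresentedGroup.of false) with h | h | h
  · exact biorder_contra r hsto hinv (PresentedGroup.of true) (PresentedGroup.of false) hrel h
  · -- b = 1 is impossible
    have h1 : (PresentedGroup.of false : PresentedGroup FiveTwoRels) = 1 := h.symm
    have h2 := congrArg (PresentedGroup.toGroup hf) h1
    rw [PresentedGroup.toGroup.of, map_one] at h2
    exact absurd h2 (by decide)
  · -- use the opposite order
    have hsto' : IsStrictTotalOrder (PresentedGroup FiveTwoRels) (fun u v => r v u) :=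
      { trichotomous := fun a b => by
          intro h1 h2
          rcases trichotomous_of r a b with h' | h' | h'
          · exact (h2 h').elim
          · exact h'
          · exact (h1 h').elim
        irrefl := fun a h' => irrefl_of r a h'
        trans := fun a b c h1 h2 => trans_of r h2 h1 }
    exact biorder_contra (fun u v => r v u) hsto'
      (fun u v w h' => hinv u w v h')
      (PresentedGroup.of true) (PresentedGroup.of false) hrel h
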